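/- Let R be a commutative ring, G a totally reflexive R-module, and S an R-algebra of finite flat dimension. Then S ⊗_R G is a totally reflexive S-module. -/

import Mathlib

universe u

open TensorProduct

/-- A `ℤ`-indexed chain complex of `R`-modules: modules `X i` with
differentials `d i : X (i+1) →ₗ[R] X i` satisfying `d ∘ d = 0`. -/
structure ModComplex (R : Type u) [CommRing R] : Type (u + 1) where
  X : ℤ → Type u
  [addCommGroup : ∀ i, AddCommGroup (X i)]
  [module : ∀ i, Module R (X i)]
  d : ∀ i : ℤ, X (i + 1) →ₗ[R] X i
  dd : ∀ i : ℤ, (d i).comp (d (i + 1)) = 0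

attribute [instance] ModComplex.addCommGroup ModComplex.module

namespace ModComplex

variable {R : Type u} [CommRing R] (L : ModComplex R)

/-- The complex is acyclic: exact at every spot. -/
def Acyclic : Prop := ∀ i : ℤ, Function.Exact (L.d (i + 1)) (L.d i)

/-- The complex `Hom_R(L, N)` is acyclic. -/
def HomAcyclic (N : Type u) [AddCommGroup N] [Module R N] : Prop :=
  ∀ i : ℤ, Function.Exact
    (fun φ : L.X i →ₗ[R] N => φ.comp (L.d i))
    (fun φ : L.X (i + 1) →ₗ[R] N => φ.comp (L.d (i + 1)))

/-- The complex `Hom_R(E, L)` is acyclic. -/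
def CoHomAcyclic (E : Type u) [AddCommGroup E] [Module R E] : Prop :=
  ∀ i : ℤ, Function.Exact
    (fun φ : E →ₗ[R] L.X (i + 1 + 1) => (L.d (i + 1)).comp φ)
    (fun φ : E →ₗ[R] L.X (i + 1) => (L.d i).comp φ)

/-- The complex `E ⊗_R L` is acyclic. -/
def TensorAcyclic (E : Type u) [AddCommGroup E] [Module R E] : Prop :=
  ∀ i : ℤ, Function.Exact
    (LinearMap.lTensor E (L.d (i + 1)))
    (LinearMap.lTensor E (L.d i))

/-- The complex consists of finitely generated projective modules. -/
def FGProj : Prop :=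
  ∀ i : ℤ, Module.Finite R (L.X i) ∧ Module.Projective R (L.X i)

/-- A totally acyclic complex: an acyclic complex of finitely generated
projective modules such that `Hom_R(L, R)` is acyclic. -/
def TotallyAcyclic : Prop := L.Acyclic ∧ L.FGProj ∧ L.HomAcyclic R

end ModComplex

/-- `M` is (isomorphic to) the cokernel of the differential `d 0 : X 1 → X 0`. -/
def IsCokerOf {R : Type u} [CommRing R] (L : ModComplex R)
    (M : Type u) [AddCommGroup M] [Module R M] : Prop :=
  ∃ f : L.X 0 →ₗ[R] M, Function.Surjective f ∧ LinearMap.ker f = LinearMap.range (L.d 0)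

/-- `M` is (isomorphic to) the kernel of the differential `d 0 : X 1 → X 0`. -/
def IsKerOf {R : Type u} [CommRing R] (L : ModComplex R)
    (M : Type u) [AddCommGroup M] [Module R M] : Prop :=
  ∃ f : M →ₗ[R] L.X 1, Function.Injective f ∧ LinearMap.range f = LinearMap.ker (L.d 0)

/-- `M` is totally reflexive: it is a cokernel of a differential in a totally
acyclic complex of finitely generated projective modules. -/
def IsTotallyReflexive (R : Type u) [CommRing R]
    (M : Type u) [AddCommGroup M] [Module R M] : Prop :=
  ∃ L : ModComplex R, L.TotallyAcyclic ∧ IsCokerOf L M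

/-- Gorenstein projective module. -/
def IsGorensteinProjective (R : Type u) [CommRing R]
    (A : Type u) [AddCommGroup A] [Module R A] : Prop :=
  ∃ L : ModComplex R, L.Acyclic ∧ (∀ i, Module.Projective R (L.X i)) ∧
    (∀ (Q : Type u) [AddCommGroup Q] [Module R Q],
      Module.Projective R Q → L.HomAcyclic Q) ∧
    IsCokerOf L A

/-- Gorenstein injective module. -/
def IsGorensteinInjective (R : Type u) [CommRing R]
    (B : Type u) [AddCommGroup B] [Module R B] : Prop :=
  ∃ L : ModComplex R, L.Acyclic ∧ (∀ i, Module.Injective R (L.X i)) ∧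
    (∀ (E : Type u) [AddCommGroup E] [Module R E],
      Module.Injective R E → L.CoHomAcyclic E) ∧
    IsKerOf L B

/-- Gorenstein flat module. -/
def IsGorensteinFlat (R : Type u) [CommRing R]
    (M : Type u) [AddCommGroup M] [Module R M] : Prop :=
  ∃ L : ModComplex R, L.Acyclic ∧ (∀ i, Module.Flat R (L.X i)) ∧
    (∀ (E : Type u) [AddCommGroup E] [Module R E],
      Module.Injective R E → L.TensorAcyclic E) ∧
    IsCokerOf L M

/-- `M` has projective dimension at most `n`. -/
def ProjDimLe (R : Type u) [CommRing R] :
    ℕ → ∀ (M : Type u) [AddCommGroup M] [Module R M], Prop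
  | 0, M, _, _ => Module.Projective R M
  | n + 1, M, _, _ =>
    ∃ (P : Type u) (_ : AddCommGroup P) (_ : Module R P) (f : P →ₗ[R] M),
      Module.Projective R P ∧ Function.Surjective f ∧
        ProjDimLe R n (LinearMap.ker f)

/-- `M` has flat dimension at most `n`. -/
def FlatDimLe (R : Type u) [CommRing R] :
    ℕ → ∀ (M : Type u) [AddCommGroup M] [Module R M], Prop
  | 0, M, _, _ => Module.Flat R M
  | n + 1, M, _, _ =>
    ∃ (F : Type u) (_ : AddCommGroup F) (_ : Module R F) (f : F →ₗ[R] M),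
      Module.Flat R F ∧ Function.Surjective f ∧
        FlatDimLe R n (LinearMap.ker f)

/-- `M` has Gorenstein projective dimension at most `n`. -/
def GProjDimLe (R : Type u) [CommRing R] :
    ℕ → ∀ (M : Type u) [AddCommGroup M] [Module R M], Prop
  | 0, M, _, _ => IsGorensteinProjective R M
  | n + 1, M, _, _ =>
    ∃ (P : Type u) (_ : AddCommGroup P) (_ : Module R P) (f : P →ₗ[R] M),
      IsGorensteinProjective R P ∧ Function.Surjective f ∧
        GProjDimLe R n (LinearMap.ker f)

/-- The projective dimension, as an element of `ℕ∞`. -/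
noncomputable def projDim (R : Type u) [CommRing R]
    (M : Type u) [AddCommGroup M] [Module R M] : ℕ∞ :=
  sInf {n : ℕ∞ | ∃ m : ℕ, n = m ∧ ProjDimLe R m M}

/-- The Gorenstein projective dimension, as an element of `ℕ∞`. -/
noncomputable def gProjDim (R : Type u) [CommRing R]
    (M : Type u) [AddCommGroup M] [Module R M] : ℕ∞ :=
  sInf {n : ℕ∞ | ∃ m : ℕ, n = m ∧ GProjDimLe R m M}

section Aux

open LinearMap

variable {R : Type u} [CommRing R]

/-- Transfer exactness across compatible bijections. -/
lemma exact_of_equiv {A B C A' B' C' : Type*} [Zero C] [Zero C']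
    (eA : A ≃ A') (eB : B ≃ B') (eC : C ≃ C')
    {f : A → B} {g : B → C} {f' : A' → B'} {g' : B' → C'}
    (hf : ∀ a, eB (f a) = f' (eA a)) (hg : ∀ b, eC (g b) = g' (eB b))
    (h0 : eC 0 = 0) (h : Function.Exact f g) : Function.Exact f' g' := by
  intro b'
  obtain ⟨b, rfl⟩ := eB.surjective b'
  rw [← hg b]
  constructor
  · intro hb
    have hgb : g b = 0 := eC.injective (by rw [hb, h0])
    obtain ⟨a, ha⟩ := (h b).mp hgb
    exact ⟨eA a, by rw [← hf, ha]⟩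
  · rintro ⟨a', ha⟩
    obtain ⟨a, rfl⟩ := eA.surjective a'
    rw [← hf] at ha
    have hfa : f a = b := eB.injective ha
    rw [(h b).mpr ⟨a, hfa⟩, h0]

lemma tensor_comm_aux {A B C D : Type u} [AddCommGroup A] [Module R A]
    [AddCommGroup B] [Module R B] [AddCommGroup C] [Module R C]
    [AddCommGroup D] [Module R D] (g : A →ₗ[R] B) (h : C →ₗ[R] D) (x : A ⊗[R] C) :
    LinearMap.lTensor B h (LinearMap.rTensor C g x)
      = LinearMap.rTensor D g (LinearMap.lTensor A h x) := by
  rw [← LinearMap.comp_apply, ← LinearMap.comp_apply,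
    LinearMap.lTensor_comp_rTensor, LinearMap.rTensor_comp_lTensor]

lemma exists_retract (P : Type u) [AddCommGroup P] [Module R P]
    [Module.Finite R P] [Module.Projective R P] :
    ∃ (n : ℕ) (i : P →ₗ[R] (Fin n → R)) (s : (Fin n → R) →ₗ[R] P),
      s ∘ₗ i = LinearMap.id := by
  obtain ⟨n, s, hs⟩ := Module.Finite.exists_fin' R P
  obtain ⟨i, hi⟩ := Module.projective_lifting_property s LinearMap.id hs
  exact ⟨n, i, s, hi⟩

lemma dual_finite_projective (P : Type u) [AddCommGroup P] [Module R P]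
    [Module.Finite R P] [Module.Projective R P] :
    Module.Finite R (Module.Dual R P) ∧ Module.Projective R (Module.Dual R P) := by
  obtain ⟨n, i, s, his⟩ := exists_retract (R := R) P
  have hcomp : i.dualMap ∘ₗ s.dualMap = LinearMap.id := by
    ext φ x
    have hx : s (i x) = x := by
      have := LinearMap.congr_fun his x; simpa using this
    simp [LinearMap.dualMap_apply, hx]
  haveI hfree : Module.Free R (Module.Dual R (Fin n → R)) :=
    Module.Free.of_basis (Pi.basisFun R (Fin n)).dualBasis
  haveI hfin : Module.Finite R (Module.Dual R (Fin n → R)) :=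
    Module.Finite.of_basis (Pi.basisFun R (Fin n)).dualBasis
  constructor
  · exact Module.Finite.of_surjective i.dualMap
      (fun φ => ⟨s.dualMap φ, LinearMap.congr_fun hcomp φ⟩)
  · exact Module.Projective.of_split s.dualMap i.dualMap hcomp

lemma dualTensorHom_bijective' (P N : Type u) [AddCommGroup P] [Module R P]
    [AddCommGroup N] [Module R N] [Module.Finite R P] [Module.Projective R P] :
    Function.Bijective (dualTensorHom R P N) := by
  obtain ⟨n, i, s, his⟩ := exists_retract (R := R) P
  have hcomp : i.dualMap ∘ₗ s.dualMap = LinearMap.id := by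
    ext φ x
    have hx : s (i x) = x := by
      have := LinearMap.congr_fun his x; simpa using this
    simp [LinearMap.dualMap_apply, hx]
  have free_bij : Function.Bijective (dualTensorHom R (Fin n → R) N) := by
    have hb := (dualTensorHomEquivOfBasis (N := N) (Pi.basisFun R (Fin n))).bijective
    have he : ⇑(dualTensorHomEquivOfBasis (N := N) (Pi.basisFun R (Fin n)))
        = ⇑(dualTensorHom R (Fin n → R) N) :=
      funext fun x => dualTensorHomEquivOfBasis_apply _ x
    rwa [he] at hb
  have nat : ∀ (A B : Type u) [AddCommGroup A] [Module R A] [AddCommGroup B] [Module R B]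
      (u : A →ₗ[R] B) (x : Module.Dual R B ⊗[R] N),
      dualTensorHom R A N (LinearMap.rTensor N u.dualMap x)
        = (dualTensorHom R B N x).comp u := by
    intro A B _ _ _ _ u x
    induction x using TensorProduct.induction_on with
    | zero => simp
    | tmul φ m => ext a; simp
    | add x y hx hy => rw [map_add, map_add, map_add, hx, hy, LinearMap.add_comp]
  have retr : ∀ x : Module.Dual R P ⊗[R] N,
      LinearMap.rTensor N i.dualMap (LinearMap.rTensor N s.dualMap x) = x := by
    intro x
    rw [← LinearMap.comp_apply, ← LinearMap.rTensor_comp, hcomp, LinearMap.rTensor_id,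
      LinearMap.id_apply]
  constructor
  · intro x y hxy
    have h1 : dualTensorHom R (Fin n → R) N (LinearMap.rTensor N s.dualMap x)
        = dualTensorHom R (Fin n → R) N (LinearMap.rTensor N s.dualMap y) := by
      rw [nat, nat, hxy]
    have h2 := free_bij.1 h1
    rw [← retr x, ← retr y, h2]
  · intro h
    obtain ⟨z, hz⟩ := free_bij.2 (h ∘ₗ s)
    refine ⟨LinearMap.rTensor N i.dualMap z, ?_⟩
    rw [nat, hz, LinearMap.comp_assoc, his, LinearMap.comp_id]

end Aux

section Induction

open LinearMap

variable {R : Type u} [CommRing R]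

theorem tensorAcyclic_of_flatDimLe (n : ℕ) :
    ∀ (M : Type u) [AddCommGroup M] [Module R M], FlatDimLe R n M →
    ∀ (L : ModComplex R), L.Acyclic → (∀ i, Module.Flat R (L.X i)) →
    L.TensorAcyclic M := by
  induction n with
  | zero =>
    intro M _ _ hM L hL _ i
    haveI : Module.Flat R M := hM
    exact Module.Flat.lTensor_exact M (hL i)
  | succ n ih =>
    intro M _ _ hM L hL hflat
    obtain ⟨F, _, _, f, hF, hfs, hKdim⟩ := hM
    haveI : Module.Flat R F := hF
    have hexact : Function.Exact (Submodule.subtype (LinearMap.ker f)) f :=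
      f.exact_subtype_ker_map
    have ihK := ih (LinearMap.ker f) hKdim L hL hflat
    have hdd : ∀ (A : Type u) [AddCommGroup A] [Module R A] (j : ℤ)
        (x : A ⊗[R] L.X (j+1+1)),
        LinearMap.lTensor A (L.d j) (LinearMap.lTensor A (L.d (j+1)) x) = 0 := by
      intro A _ _ j x
      rw [← LinearMap.comp_apply, ← LinearMap.lTensor_comp, L.dd j,
        LinearMap.lTensor_zero, LinearMap.zero_apply]
    intro i
    obtain ⟨j, rfl⟩ : ∃ j, i = j + 1 := ⟨i - 1, by ring⟩
    intro z
    constructor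
    · intro hz
      obtain ⟨y, hy⟩ := LinearMap.rTensor_surjective (L.X (j+1+1)) hfs z
      have hw0 : LinearMap.rTensor (L.X (j+1)) f (LinearMap.lTensor F (L.d (j+1)) y) = 0 := by
        rw [← tensor_comm_aux, hy, hz]
      obtain ⟨k, hk⟩ := ((rTensor_exact (L.X (j+1)) hexact hfs) _).mp hw0
      have hkd : LinearMap.lTensor (LinearMap.ker f) (L.d j) k = 0 := by
        haveI := hflat j
        have hinj : Function.Injective
            (LinearMap.rTensor (L.X j) (Submodule.subtype (LinearMap.ker f))) :=
          Module.Flat.rTensor_preserves_injective_linearMap _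
            (Submodule.injective_subtype (LinearMap.ker f))
        apply hinj
        rw [map_zero, ← tensor_comm_aux, hk]
        exact hdd F j y
      obtain ⟨k', hk'⟩ := (ihK j k).mp hkd
      have hy2 : LinearMap.lTensor F (L.d (j+1))
          (y - LinearMap.rTensor (L.X (j+1+1)) (Submodule.subtype (LinearMap.ker f)) k') = 0 := by
        rw [map_sub, tensor_comm_aux, hk', hk, sub_self]
      obtain ⟨y3, hy3⟩ := ((Module.Flat.lTensor_exact F (hL (j+1))) _).mp hy2
      refine ⟨LinearMap.rTensor (L.X (j+1+1+1)) f y3, ?_⟩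
      have hfι : f ∘ₗ Submodule.subtype (LinearMap.ker f) = 0 := by
        ext ⟨x, hx⟩; simpa using hx
      rw [tensor_comm_aux, hy3, map_sub, hy, ← LinearMap.comp_apply,
        ← LinearMap.rTensor_comp, hfι, LinearMap.rTensor_zero, LinearMap.zero_apply, sub_zero]
    · rintro ⟨x, rfl⟩
      exact hdd M (j+1) x

theorem homTensor_aux (n : ℕ) :
    ∀ (M : Type u) [AddCommGroup M] [Module R M], FlatDimLe R n M →
    ∀ (L : ModComplex R),
    (∀ j : ℤ, Function.Exact ⇑((L.d j).dualMap) ⇑((L.d (j+1)).dualMap)) →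
    (∀ j : ℤ, Module.Flat R (Module.Dual R (L.X j))) →
    ∀ i : ℤ, Function.Exact
      (LinearMap.lTensor M ((L.d i).dualMap))
      (LinearMap.lTensor M ((L.d (i+1)).dualMap)) := by
  induction n with
  | zero =>
    intro M _ _ hM L hδ _ i
    haveI : Module.Flat R M := hM
    exact Module.Flat.lTensor_exact M (hδ i)
  | succ n ih =>
    intro M _ _ hM L hδ hflat
    obtain ⟨F, _, _, f, hF, hfs, hKdim⟩ := hM
    haveI : Module.Flat R F := hF
    have hexact : Function.Exact (Submodule.subtype (LinearMap.ker f)) f :=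
      f.exact_subtype_ker_map
    have ihK := ih (LinearMap.ker f) hKdim L hδ hflat
    have hddd : ∀ (j : ℤ), ((L.d (j+1)).dualMap) ∘ₗ ((L.d j).dualMap)
        = (0 : Module.Dual R (L.X j) →ₗ[R] Module.Dual R (L.X (j+1+1))) := by
      intro j
      rw [LinearMap.dualMap_comp_dualMap, L.dd j]
      ext φ x; simp
    have hdd : ∀ (A : Type u) [AddCommGroup A] [Module R A] (j : ℤ)
        (x : A ⊗[R] Module.Dual R (L.X j)),
        LinearMap.lTensor A ((L.d (j+1)).dualMap)
          (LinearMap.lTensor A ((L.d j).dualMap) x) = 0 := by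
      intro A _ _ j x
      rw [← LinearMap.comp_apply, ← LinearMap.lTensor_comp, hddd j,
        LinearMap.lTensor_zero, LinearMap.zero_apply]
    intro i
    intro z
    constructor
    · intro hz
      obtain ⟨y, hy⟩ := LinearMap.rTensor_surjective (Module.Dual R (L.X (i+1))) hfs z
      have hw0 : LinearMap.rTensor (Module.Dual R (L.X (i+1+1))) f
          (LinearMap.lTensor F ((L.d (i+1)).dualMap) y) = 0 := by
        rw [← tensor_comm_aux, hy, hz]
      obtain ⟨k, hk⟩ :=
        ((rTensor_exact (Module.Dual R (L.X (i+1+1))) hexact hfs) _).mp hw0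
      have hkd : LinearMap.lTensor (LinearMap.ker f) ((L.d (i+1+1)).dualMap) k = 0 := by
        haveI := hflat (i+1+1+1)
        have hinj : Function.Injective
            (LinearMap.rTensor (Module.Dual R (L.X (i+1+1+1)))
              (Submodule.subtype (LinearMap.ker f))) :=
          Module.Flat.rTensor_preserves_injective_linearMap _
            (Submodule.injective_subtype (LinearMap.ker f))
        apply hinj
        rw [map_zero, ← tensor_comm_aux, hk]
        exact hdd F (i+1) y
      obtain ⟨k', hk'⟩ := (ihK (i+1) k).mp hkd
      have hy2 : LinearMap.lTensor F ((L.d (i+1)).dualMap)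
          (y - LinearMap.rTensor (Module.Dual R (L.X (i+1)))
            (Submodule.subtype (LinearMap.ker f)) k') = 0 := by
        rw [map_sub, tensor_comm_aux, hk', hk, sub_self]
      obtain ⟨y3, hy3⟩ := ((Module.Flat.lTensor_exact F (hδ i)) _).mp hy2
      refine ⟨LinearMap.rTensor (Module.Dual R (L.X i)) f y3, ?_⟩
      have hfι : f ∘ₗ Submodule.subtype (LinearMap.ker f) = 0 := by
        ext ⟨x, hx⟩; simpa using hx
      rw [tensor_comm_aux, hy3, map_sub, hy, ← LinearMap.comp_apply,
        ← LinearMap.rTensor_comp, hfι, LinearMap.rTensor_zero, LinearMap.zero_apply]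
      exact sub_zero z
    · rintro ⟨x, rfl⟩
      exact hdd M i x

end Induction

/-- Base change of a complex along `R → S`. -/
noncomputable def ModComplex.baseChangeComplex {R : Type u} [CommRing R]
    (S : Type u) [CommRing S] [Algebra R S] (L : ModComplex R) : ModComplex S where
  X i := S ⊗[R] L.X i
  d i := (L.d i).baseChange S
  dd i := by
    rw [← LinearMap.baseChange_comp, L.dd i]
    exact LinearMap.baseChange_zero

/-- Base change of a totally reflexive module along an algebra of finite
flat dimension is totally reflexive. -/
theorem totallyReflexive_baseChange {R : Type u} [CommRing R]
    (S : Type u) [CommRing S] [Algebra R S]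
    (hS : ∃ n : ℕ, FlatDimLe R n S)
    (G : Type u) [AddCommGroup G] [Module R G]
    (hG : IsTotallyReflexive R G) :
    IsTotallyReflexive S (S ⊗[R] G) := by
  obtain ⟨n, hSdim⟩ := hS
  obtain ⟨L, ⟨hAc, hFG, hHom⟩, g, hgsurj, hgker⟩ := hG
  have hfinX : ∀ i, Module.Finite R (L.X i) := fun i => (hFG i).1
  have hprojX : ∀ i, Module.Projective R (L.X i) := fun i => (hFG i).2
  have hflatX : ∀ i, Module.Flat R (L.X i) := fun i => by
    haveI := hprojX i; exact Module.Flat.of_projective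
  have hflatD : ∀ j : ℤ, Module.Flat R (Module.Dual R (L.X j)) := fun j => by
    haveI := hfinX j; haveI := hprojX j
    haveI := (dual_finite_projective (R := R) (L.X j)).2
    exact Module.Flat.of_projective
  have hδ : ∀ j : ℤ, Function.Exact ⇑((L.d j).dualMap) ⇑((L.d (j+1)).dualMap) := by
    intro j
    have h1 : ⇑((L.d j).dualMap) = (fun φ : L.X j →ₗ[R] R => φ.comp (L.d j)) := by
      funext φ; exact LinearMap.dualMap_apply' _ _
    have h2 : ⇑((L.d (j+1)).dualMap)
        = (fun φ : L.X (j+1) →ₗ[R] R => φ.comp (L.d (j+1))) := by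
      funext φ; exact LinearMap.dualMap_apply' _ _
    rw [h1, h2]
    exact hHom j
  refine ⟨ModComplex.baseChangeComplex S L, ⟨?_, ?_, ?_⟩, ?_⟩
  · -- Acyclic
    intro i
    exact tensorAcyclic_of_flatDimLe n S hSdim L hAc hflatX i
  · -- FGProj
    intro i
    haveI := hfinX i; haveI := hprojX i
    constructor
    · show Module.Finite S (S ⊗[R] L.X i); infer_instance
    · show Module.Projective S (S ⊗[R] L.X i); infer_instance
  · -- HomAcyclic
    intro i
    have hH := homTensor_aux n S hSdim L hδ hflatD i
    let eFun : ∀ j : ℤ, S ⊗[R] Module.Dual R (L.X j) → ((S ⊗[R] L.X j) →ₗ[S] S) :=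
      fun j x => LinearMap.liftBaseChangeEquiv S
        ((dualTensorHom R (L.X j) S) ((TensorProduct.comm R S (Module.Dual R (L.X j))) x))
    have hbij : ∀ j : ℤ, Function.Bijective (eFun j) := by
      intro j
      haveI := hfinX j; haveI := hprojX j
      exact (LinearMap.liftBaseChangeEquiv S).bijective.comp
        ((dualTensorHom_bijective' (L.X j) S).comp (TensorProduct.comm R S _).bijective)
    have h0 : ∀ j : ℤ, eFun j 0 = 0 := by
      intro j
      show LinearMap.liftBaseChangeEquiv S
        ((dualTensorHom R (L.X j) S) ((TensorProduct.comm R S (Module.Dual R (L.X j))) 0)) = 0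
      rw [map_zero, map_zero, map_zero]
    have key : ∀ (j : ℤ) (x : S ⊗[R] Module.Dual R (L.X j)),
        eFun (j+1) (LinearMap.lTensor S ((L.d j).dualMap) x)
          = (eFun j x).comp ((L.d j).baseChange S) := by
      intro j x
      induction x using TensorProduct.induction_on with
      | zero =>
        rw [map_zero, h0]
        rw [h0, LinearMap.zero_comp]
      | tmul s φ =>
        apply LinearMap.ext; intro t
        induction t using TensorProduct.induction_on with
        | zero => simp
        | tmul a m => simp [eFun]
        | add u v hu hv => simp only [map_add, hu, hv]
      | add u v hu hv =>
        have e1 : ∀ (j : ℤ) (a b : S ⊗[R] Module.Dual R (L.X j)),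
            eFun j (a + b) = eFun j a + eFun j b := by
          intro j a b
          show LinearMap.liftBaseChangeEquiv S ((dualTensorHom R (L.X j) S)
            ((TensorProduct.comm R S (Module.Dual R (L.X j))) (a + b))) = _
          rw [map_add, map_add, map_add]
        rw [map_add, e1, hu, hv, e1, LinearMap.add_comp]
    exact exact_of_equiv (Equiv.ofBijective _ (hbij i)) (Equiv.ofBijective _ (hbij (i+1)))
      (Equiv.ofBijective _ (hbij (i+1+1))) (key i) (key (i+1)) (h0 (i+1+1)) hH
  · -- IsCokerOf
    refine ⟨g.baseChange S, ?_, ?_⟩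
    · exact LinearMap.lTensor_surjective S hgsurj
    · have hex2 : Function.Exact (LinearMap.lTensor S (L.d 0)) (LinearMap.lTensor S g) :=
        lTensor_exact S (LinearMap.exact_iff.mpr hgker) hgsurj
      ext x
      simp only [LinearMap.mem_ker, LinearMap.mem_range]
      constructor
      · intro hx
        obtain ⟨a, ha⟩ := (hex2 x).mp hx
        exact ⟨a, ha⟩
      · rintro ⟨a, rfl⟩
        exact (hex2 _).mpr ⟨a, rfl⟩
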